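/- Let T be a bounded operator on H that has Toeplitz matrix with coefficient sequence c : ℤ → ℂ. Then the associated harmonic symbol is dominated by the operator norm: for every z in the open unit disc 𝔻, |Σ_{k≥1} c(k)·z^k + Σ_{k≥0} c(−k)·conj(z)^k| ≤ ‖T‖ (i.e. ‖φ‖_∞ ≤ ‖T‖ where φ(z) = Σ_{k≥0} c(−k) conj(z)^k + Σ_{k≥1} c(k) z^k). -/

import Mathlib

open scoped ComplexConjugate

local notation "⟪" x ", " y "⟫" => @inner ℂ _ _ x y

set_option maxHeartbeats 3200000 in
theorem statement16 {H : Type*} [NormedAddCommGroup H] [InnerProductSpace ℂ H]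
    [CompleteSpace H]
    (e : ℕ → H)
    (horth : ∀ m n : ℕ, 1 ≤ m → 1 ≤ n → ⟪e m, e n⟫ = if m = n then (m : ℂ) else 0)
    (hdense : Dense (Submodule.span ℂ (e '' {n : ℕ | 1 ≤ n}) : Set H))
    (T : H →L[ℂ] H) (c : ℤ → ℂ)
    (hT : ∀ m n : ℕ, 1 ≤ m → 1 ≤ n → ⟪e m, T (e n)⟫ = (m : ℂ) * c ((m : ℤ) - n)) :
    ∀ z ∈ Metric.ball (0 : ℂ) 1,
      ‖(∑' k : ℕ, c ((k : ℤ) + 1) * z ^ (k + 1)) + ∑' k : ℕ, c (-(k : ℤ)) * (conj z) ^ k‖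
        ≤ ‖T‖ := by
  set B := ‖T‖ with hBdef
  have hB0 : (0:ℝ) ≤ B := norm_nonneg T
  -- squared norms of the basis vectors
  have hE : ∀ n : ℕ, 1 ≤ n → ‖e n‖ ^ 2 = (n : ℝ) := by
    intro n hn
    have h := horth n n hn hn
    rw [if_pos rfl, inner_self_eq_norm_sq_to_K] at h
    have h' : ((‖e n‖ ^ 2 : ℝ) : ℂ) = ((n : ℝ) : ℂ) := by push_cast; exact h
    exact_mod_cast h'
  have hE1 : ∀ n : ℕ, 1 ≤ n → ‖e n‖ ≤ (n : ℝ) := by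
    intro n hn
    have h1 : (1:ℝ) ≤ (n:ℝ) := by exact_mod_cast hn
    nlinarith [hE n hn, norm_nonneg (e n), sq_nonneg (‖e n‖ - 1)]
  -- the basic coefficient bound
  have hc : ∀ d : ℤ, ‖c d‖ ≤ B * (|(d:ℝ)| + 1) := by
    intro d
    rcases le_or_gt 0 d with hd | hd
    · -- use m = d.toNat + 1, n = 1
      set m : ℕ := d.toNat + 1 with hm
      have hm1 : 1 ≤ m := by omega
      have h := hT m 1 hm1 le_rfl
      norm_num at h
      have harg : ((m:ℤ) - 1) = d := by
        simp [hm, Int.toNat_of_nonneg hd]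
      rw [harg] at h
      have hcs : ‖⟪e m, T (e 1)⟫‖ ≤ ‖e m‖ * ‖T (e 1)‖ := norm_inner_le_norm _ _
      have hTe : ‖T (e 1)‖ ≤ B * 1 := by
        calc ‖T (e 1)‖ ≤ B * ‖e 1‖ := T.le_opNorm _
        _ ≤ B * 1 := by
            have := hE1 1 le_rfl
            gcongr
            exact_mod_cast this
      have hmpos : (0:ℝ) < (m:ℝ) := by exact_mod_cast hm1
      have key : (m:ℝ) * ‖c d‖ ≤ (m:ℝ) * B := by
        calc (m:ℝ) * ‖c d‖ = ‖(m:ℂ) * c d‖ := by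
              rw [norm_mul]; norm_num
        _ = ‖⟪e m, T (e 1)⟫‖ := by rw [h]
        _ ≤ ‖e m‖ * ‖T (e 1)‖ := hcs
        _ ≤ (m:ℝ) * (B * 1) :=
            mul_le_mul (hE1 m hm1) hTe (norm_nonneg _) (Nat.cast_nonneg m)
        _ = (m:ℝ) * B := by ring
      have := le_of_mul_le_mul_left (by linarith [key] : (m:ℝ) * ‖c d‖ ≤ (m:ℝ) * B) hmpos
      have habs : (1:ℝ) ≤ |(d:ℝ)| + 1 := by linarith [abs_nonneg ((d:ℝ))]
      calc ‖c d‖ ≤ B := this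
      _ = B * 1 := by ring
      _ ≤ B * (|(d:ℝ)| + 1) := by gcongr
    · -- use m = 1, n = (1 - d).toNat
      set n : ℕ := (1 - d).toNat with hn
      have hn1 : 1 ≤ n := by omega
      have h := hT 1 n le_rfl hn1
      norm_num at h
      have harg : ((1:ℤ) - n) = d := by
        have : (n:ℤ) = 1 - d := by
          rw [hn, Int.toNat_of_nonneg (by omega)]
        omega
      rw [harg] at h
      have h1 : (n:ℤ) = 1 - d := by rw [hn, Int.toNat_of_nonneg (by omega)]
      have hcast : (n:ℝ) = |(d:ℝ)| + 1 := by
        have h2 : ((n:ℤ):ℝ) = ((1 - d : ℤ):ℝ) := by rw [h1]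
        rw [abs_of_neg (show (d:ℝ) < 0 by exact_mod_cast hd)]
        push_cast at h2 ⊢
        linarith
      have he1 : ‖e 1‖ ≤ 1 := by simpa using hE1 1 le_rfl
      have hTen : ‖T (e n)‖ ≤ B * (n:ℝ) := by
        calc ‖T (e n)‖ ≤ B * ‖e n‖ := T.le_opNorm _
        _ ≤ B * (n:ℝ) := by gcongr; exact hE1 n hn1
      calc ‖c d‖ = ‖⟪e 1, T (e n)⟫‖ := by rw [h]
      _ ≤ ‖e 1‖ * ‖T (e n)‖ := norm_inner_le_norm _ _
      _ ≤ 1 * (B * (n:ℝ)) := mul_le_mul he1 hTen (norm_nonneg _) zero_le_one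
      _ = B * (n:ℝ) := by ring
      _ = B * (|(d:ℝ)| + 1) := by rw [hcast]
  intro z hz
  rw [Metric.mem_ball, dist_zero_right] at hz
  rcases eq_or_ne z 0 with hz0 | hz0
  · -- z = 0 : the symbol value is c 0
    subst hz0
    have h1 : (∑' k : ℕ, c ((k:ℤ)+1) * (0:ℂ)^(k+1)) = 0 := by simp
    have h2 : (∑' k : ℕ, c (-(k:ℤ)) * (conj (0:ℂ))^k) = c 0 := by
      rw [map_zero]
      rw [tsum_eq_single 0 (fun k hk => by simp [zero_pow hk])]
      simp
    rw [h1, h2, zero_add]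
    have h := hT 1 1 le_rfl le_rfl
    norm_num at h
    have he1 : ‖e 1‖ ≤ 1 := by simpa using hE1 1 le_rfl
    have hTe1 : ‖T (e 1)‖ ≤ B * 1 := by
      calc ‖T (e 1)‖ ≤ B * ‖e 1‖ := T.le_opNorm _
      _ ≤ B * 1 := mul_le_mul_of_nonneg_left he1 hB0
    calc ‖c 0‖ = ‖⟪e 1, T (e 1)⟫‖ := by rw [h]
    _ ≤ ‖e 1‖ * ‖T (e 1)‖ := norm_inner_le_norm _ _
    _ ≤ 1 * (B * 1) := mul_le_mul he1 hTe1 (norm_nonneg _) zero_le_one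
    _ = B := by ring
  · -- z ≠ 0
    set r := ‖z‖ with hrdef
    have hr0 : 0 < r := norm_pos_iff.mpr hz0
    have hr1 : r < 1 := hz
    have hrn : ‖r‖ < 1 := by rwa [Real.norm_eq_abs, abs_of_pos hr0]
    set g : ℕ → ℝ := fun i => ((i:ℝ)+1) * r^i with hgdef
    have hg : Summable g := by
      have h1 := summable_pow_mul_geometric_of_norm_lt_one 1 hrn
      have h0 := summable_geometric_of_lt_one (le_of_lt hr0) hr1
      exact (h1.add h0).congr (fun i => by simp [hgdef]; ring)
    have hgnn : ∀ i, 0 ≤ g i := fun i => by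
      have : (0:ℝ) ≤ r := le_of_lt hr0
      simp only [hgdef]; positivity
    set C1 : ℝ := ∑' i, g i with hC1def
    have hC1 : 0 ≤ C1 := tsum_nonneg hgnn
    have hg2 : Summable (fun i : ℕ => ((i:ℝ)+1)^2 * r^i) := by
      have h2 := summable_pow_mul_geometric_of_norm_lt_one 2 hrn
      have h1 := summable_pow_mul_geometric_of_norm_lt_one 1 hrn
      have h0 := summable_geometric_of_lt_one (le_of_lt hr0) hr1
      exact ((h2.add (h1.mul_left 2)).add h0).congr (fun i => by push_cast; ring)
    set C2 : ℝ := ∑' i : ℕ, ((i:ℝ)+1)^2 * r^i with hC2def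
    have hC2 : 0 ≤ C2 := tsum_nonneg (fun i => by positivity)
    have htail : ∀ J : ℕ, (∑' i : ℕ, g (i + J)) ≤ ((J:ℝ)+1) * r^J * C1 := by
      intro J
      have hsl : Summable (fun i : ℕ => g (i + J)) := (summable_nat_add_iff J).mpr hg
      have hle : ∀ i : ℕ, g (i + J) ≤ ((J:ℝ)+1) * r^J * g i := by
        intro i
        have hcoef : ((i:ℝ) + (J:ℝ) + 1) ≤ ((J:ℝ)+1) * ((i:ℝ)+1) := by
          nlinarith [Nat.cast_nonneg (α := ℝ) i, Nat.cast_nonneg (α := ℝ) J]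
        have heq : g (i + J) = ((i:ℝ) + (J:ℝ) + 1) * (r^i * r^J) := by
          show ((((i+J):ℕ):ℝ)+1) * r^(i+J) = _
          push_cast [pow_add]; ring
        rw [heq]
        calc ((i:ℝ) + (J:ℝ) + 1) * (r^i * r^J)
            ≤ (((J:ℝ)+1) * ((i:ℝ)+1)) * (r^i * r^J) :=
              mul_le_mul_of_nonneg_right hcoef (by positivity)
        _ = ((J:ℝ)+1) * r^J * g i := by show _ = _ * (((i:ℝ)+1) * r^i); ring
      calc (∑' i : ℕ, g (i + J)) ≤ ∑' i : ℕ, ((J:ℝ)+1) * r^J * g i :=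
            Summable.tsum_le_tsum hle hsl (hg.mul_left _)
      _ = ((J:ℝ)+1) * r^J * C1 := by rw [tsum_mul_left]
    set f1 : ℕ → ℂ := fun k => c ((k:ℤ)+1) * z^(k+1) with hf1def
    set f2 : ℕ → ℂ := fun k => c (-(k:ℤ)) * (conj z)^k with hf2def
    have hf1b : ∀ i : ℕ, ‖f1 i‖ ≤ B * g (i+1) := by
      intro i
      have h1 : ‖f1 i‖ = ‖c ((i:ℤ)+1)‖ * r^(i+1) := by
        show ‖c ((i:ℤ)+1) * z^(i+1)‖ = _
        rw [norm_mul, norm_pow]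
      have h2 : ‖c ((i:ℤ)+1)‖ ≤ B * ((i:ℝ)+2) := by
        have h3 := hc ((i:ℤ)+1)
        have habs : |(((i:ℤ)+1 : ℤ):ℝ)| = (i:ℝ)+1 := by
          push_cast; rw [abs_of_nonneg (by positivity)]
        rw [habs] at h3
        calc ‖c ((i:ℤ)+1)‖ ≤ B * (((i:ℝ)+1) + 1) := h3
        _ = B * ((i:ℝ)+2) := by ring
      have hgv : B * g (i+1) = B * (((i:ℝ)+2) * r^(i+1)) := by
        show B * (((((i+1:ℕ)):ℝ)+1) * r^(i+1)) = _
        push_cast; ring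
      rw [h1, hgv]
      exact mul_le_mul_of_nonneg_right h2 (by positivity) |>.trans_eq (by ring)
    have hf2b : ∀ i : ℕ, ‖f2 i‖ ≤ B * g i := by
      intro i
      have h1 : ‖f2 i‖ = ‖c (-(i:ℤ))‖ * r^i := by
        show ‖c (-(i:ℤ)) * (conj z)^i‖ = _
        rw [norm_mul, norm_pow, RCLike.norm_conj]
      have h2 : ‖c (-(i:ℤ))‖ ≤ B * ((i:ℝ)+1) := by
        have h3 := hc (-(i:ℤ))
        have habs : |((-(i:ℤ) : ℤ):ℝ)| = (i:ℝ) := by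
          push_cast; rw [abs_neg, abs_of_nonneg (by positivity)]
        rw [habs] at h3
        exact h3
      have hgv : B * g i = B * (((i:ℝ)+1) * r^i) := rfl
      rw [h1, hgv]
      exact mul_le_mul_of_nonneg_right h2 (by positivity) |>.trans_eq (by ring)
    have hn1 : Summable (fun i => ‖f1 i‖) :=
      Summable.of_nonneg_of_le (fun i => norm_nonneg _) hf1b
        (((summable_nat_add_iff 1).mpr hg).mul_left B)
    have hs1 : Summable f1 := hn1.of_norm
    have hn2 : Summable (fun i => ‖f2 i‖) :=
      Summable.of_nonneg_of_le (fun i => norm_nonneg _) hf2b (hg.mul_left B)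
    have hs2 : Summable f2 := hn2.of_norm
    have hzz : ∀ k : ℕ, z^k * (conj z)^k = ((r^(2*k) : ℝ) : ℂ) := by
      intro k
      have h1 : z * conj z = ((r^2 : ℝ) : ℂ) := by
        rw [Complex.mul_conj]
        norm_cast
        rw [Complex.normSq_eq_norm_sq, hrdef]
      rw [← mul_pow, h1, ← Complex.ofReal_pow, ← pow_mul]
    have key : ∀ N : ℕ, ‖(∑' k, f1 k) + ∑' k, f2 k‖
        ≤ B + B*C2*((N:ℝ)+2)⁻¹ + 2*B*C1*(((N:ℝ)+2)^3 * r^(N+1)) := by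
      intro N
      set M : ℕ := N + 1 with hMdef
      have hM1 : 1 ≤ M := Nat.le_add_left 1 N
      set I : Finset ℕ := Finset.Icc (M+1) (2*M) with hIdef
      set a : ℕ → ℂ := fun n => (conj z)^n * ((n:ℂ))⁻¹ with hadef
      set v : H := ∑ n ∈ I, a n • e n with hvdef
      set q : ℕ → ℂ := fun n => ((r^(2*n) * ((n:ℝ))⁻¹ : ℝ) : ℂ) with hqdef
      set S : ℝ := ∑ n ∈ I, r^(2*n) * ((n:ℝ))⁻¹ with hSdef
      set W : ℕ → ℕ → ℂ := fun m n => z^m * (conj z)^n * c ((m:ℤ) - (n:ℤ)) * ((n:ℂ))⁻¹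
        with hWdef
      have hTv : T v = ∑ n ∈ I, a n • T (e n) := by
        rw [hvdef, map_sum]
        simp only [map_smul]
      have hconja : ∀ m : ℕ, (starRingEnd ℂ) (a m) = z^m * ((m:ℂ))⁻¹ := by
        intro m
        simp [hadef, map_mul, map_pow, map_inv₀, Complex.conj_conj]
      have hQ : ⟪v, T v⟫ = ∑ m ∈ I, ∑ n ∈ I, W m n := by
        rw [hTv, hvdef, sum_inner]
        refine Finset.sum_congr rfl (fun m hm => ?_)
        rw [inner_smul_left, inner_sum, Finset.mul_sum]
        refine Finset.sum_congr rfl (fun n hn => ?_)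
        have hm' := Finset.mem_Icc.mp hm
        have hn' := Finset.mem_Icc.mp hn
        rw [inner_smul_right, hT m n (by omega) (by omega), hconja]
        have hm0 : (m:ℂ) ≠ 0 := Nat.cast_ne_zero.mpr (by omega)
        show z^m * ((m:ℂ))⁻¹ * (((conj z)^n * ((n:ℂ))⁻¹) * ((m:ℂ) * c ((m:ℤ) - (n:ℤ))))
          = z^m * (conj z)^n * c ((m:ℤ) - (n:ℤ)) * ((n:ℂ))⁻¹
        calc z^m * ((m:ℂ))⁻¹ * (((conj z)^n * ((n:ℂ))⁻¹) * ((m:ℂ) * c ((m:ℤ) - (n:ℤ))))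
            = (z^m * (conj z)^n * c ((m:ℤ) - (n:ℤ)) * ((n:ℂ))⁻¹) * (((m:ℂ))⁻¹ * (m:ℂ)) := by
              ring
        _ = z^m * (conj z)^n * c ((m:ℤ) - (n:ℤ)) * ((n:ℂ))⁻¹ := by
              rw [inv_mul_cancel₀ hm0, mul_one]
      have hVV : ⟪v, v⟫ = ((S : ℝ) : ℂ) := by
        rw [hvdef, sum_inner, hSdef, Complex.ofReal_sum]
        refine Finset.sum_congr rfl (fun m hm => ?_)
        have hm' := Finset.mem_Icc.mp hm
        rw [inner_smul_left, inner_sum, Finset.mul_sum]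
        rw [Finset.sum_eq_single m]
        · rw [inner_smul_right, horth m m (by omega) (by omega), if_pos rfl, hconja]
          have hm0 : (m:ℂ) ≠ 0 := Nat.cast_ne_zero.mpr (by omega)
          rw [Complex.ofReal_mul, Complex.ofReal_inv, Complex.ofReal_natCast, ← hzz m]
          show z^m * ((m:ℂ))⁻¹ * (((conj z)^m * ((m:ℂ))⁻¹) * (m:ℂ))
            = z^m * (conj z)^m * ((m:ℂ))⁻¹
          calc z^m * ((m:ℂ))⁻¹ * (((conj z)^m * ((m:ℂ))⁻¹) * (m:ℂ))
              = (z^m * (conj z)^m * ((m:ℂ))⁻¹) * (((m:ℂ))⁻¹ * (m:ℂ)) := by ring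
          _ = z^m * (conj z)^m * ((m:ℂ))⁻¹ := by rw [inv_mul_cancel₀ hm0, mul_one]
        · intro n hn hne
          have hn' := Finset.mem_Icc.mp hn
          rw [inner_smul_right, horth m n (by omega) (by omega),
            if_neg (fun h => hne h.symm), mul_zero, mul_zero]
        · intro hm2
          exact absurd hm hm2
      have hnormv : ‖v‖^2 = S := by
        have h := inner_self_eq_norm_sq_to_K (𝕜 := ℂ) v
        rw [hVV] at h
        have h2 : ((S:ℝ):ℂ) = ((‖v‖^2 : ℝ):ℂ) := by rw [h]; norm_cast
        exact (Complex.ofReal_inj.mp h2).symm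
      have hS0 : 0 ≤ S := by rw [← hnormv]; positivity
      have hQle : ‖⟪v, T v⟫‖ ≤ B * S := by
        calc ‖⟪v, T v⟫‖ ≤ ‖v‖ * ‖T v‖ := norm_inner_le_norm _ _
        _ ≤ ‖v‖ * (B * ‖v‖) := mul_le_mul_of_nonneg_left (T.le_opNorm v) (norm_nonneg v)
        _ = B * ‖v‖^2 := by ring
        _ = B * S := by rw [hnormv]
      set G1 : ℕ → ℂ := fun n => ∑ m ∈ I.filter (fun m => n < m), W m n with hG1def
      set G2 : ℕ → ℂ := fun m => ∑ n ∈ I.filter (fun x => m ≤ x), W m n with hG2def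
      have hsplit : ∑ m ∈ I, ∑ n ∈ I, W m n = (∑ n ∈ I, G1 n) + ∑ m ∈ I, G2 m := by
        rw [Finset.sum_comm]
        have h1 : ∀ n ∈ I, ∑ m ∈ I, W m n
            = G1 n + ∑ m ∈ I.filter (fun m => m ≤ n), W m n := by
          intro n _
          rw [← Finset.sum_filter_add_sum_filter_not I (fun m => n < m) (fun m => W m n)]
          congr 1
          apply Finset.sum_congr _ (fun _ _ => rfl)
          apply Finset.filter_congr
          intro m _
          simp [Nat.not_lt]
        rw [Finset.sum_congr rfl h1, Finset.sum_add_distrib]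
        congr 1
        rw [Finset.sum_congr rfl
          (fun n _ => Finset.sum_filter (fun m => m ≤ n) (fun m => W m n))]
        rw [Finset.sum_comm]
        exact Finset.sum_congr rfl (fun m _ => (Finset.sum_filter _ _).symm)
      have hfilter1 : ∀ n ∈ I, I.filter (fun m => n < m) = Finset.Icc (n+1) (2*M) := by
        intro n hn
        have hn' := Finset.mem_Icc.mp hn
        ext x
        simp only [Finset.mem_filter, Finset.mem_Icc, hIdef]
        omega
      have hfilter2 : ∀ m ∈ I, I.filter (fun x => m ≤ x) = Finset.Icc m (2*M) := by
        intro m hm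
        have hm' := Finset.mem_Icc.mp hm
        ext x
        simp only [Finset.mem_filter, Finset.mem_Icc, hIdef]
        omega
      have hG1eq : ∀ n ∈ I, G1 n = q n * (∑ k ∈ Finset.range (2*M - n), f1 k) := by
        intro n hn
        have hn' := Finset.mem_Icc.mp hn
        show ∑ m ∈ I.filter (fun m => n < m), W m n = _
        rw [hfilter1 n hn, ← Finset.Ico_add_one_right_eq_Icc, Finset.sum_Ico_eq_sum_range]
        have hJ : 2*M+1 - (n+1) = 2*M - n := by omega
        rw [hJ, Finset.mul_sum]
        refine Finset.sum_congr rfl (fun k _ => ?_)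
        have hzn : z^(n+1+k) = z^(k+1) * z^n := by rw [← pow_add]; congr 1; omega
        have hargc : ((n+1+k : ℕ):ℤ) - (n:ℤ) = (k:ℤ)+1 := by push_cast; ring
        show z^(n+1+k) * (conj z)^n * c (((n+1+k:ℕ):ℤ) - (n:ℤ)) * ((n:ℂ))⁻¹ = q n * f1 k
        rw [hargc, hzn]
        have hzzn := hzz n
        calc z^(k+1) * z^n * (conj z)^n * c ((k:ℤ)+1) * ((n:ℂ))⁻¹
            = (z^n * (conj z)^n) * ((n:ℂ))⁻¹ * (c ((k:ℤ)+1) * z^(k+1)) := by ring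
        _ = q n * f1 k := by
              rw [hzzn]
              show _ = ((r^(2*n) * ((n:ℝ))⁻¹ : ℝ):ℂ) * f1 k
              show _ = ((r^(2*n) * ((n:ℝ))⁻¹ : ℝ):ℂ) * (c ((k:ℤ)+1) * z^(k+1))
              push_cast
              ring
      have hG2eq : ∀ m ∈ I, G2 m = ∑ j ∈ Finset.range (2*M+1-m),
          (f2 j * ((r^(2*m):ℝ):ℂ) * (((m+j:ℕ):ℂ))⁻¹) := by
        intro m hm
        have hm' := Finset.mem_Icc.mp hm
        show ∑ n ∈ I.filter (fun x => m ≤ x), W m n = _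
        rw [hfilter2 m hm, ← Finset.Ico_add_one_right_eq_Icc, Finset.sum_Ico_eq_sum_range]
        refine Finset.sum_congr rfl (fun j _ => ?_)
        have hargc : ((m:ℤ) - ((m+j:ℕ):ℤ)) = -(j:ℤ) := by push_cast; ring
        show z^m * (conj z)^(m+j) * c ((m:ℤ) - ((m+j:ℕ):ℤ)) * (((m+j:ℕ):ℂ))⁻¹ = _
        rw [hargc, pow_add]
        have hzzm := hzz m
        calc z^m * ((conj z)^m * (conj z)^j) * c (-(j:ℤ)) * (((m+j:ℕ):ℂ))⁻¹
            = (z^m * (conj z)^m) * (c (-(j:ℤ)) * (conj z)^j) * (((m+j:ℕ):ℂ))⁻¹ := by ring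
        _ = _ := by
              rw [hzzm]
              show _ = f2 j * ((r^(2*m):ℝ):ℂ) * (((m+j:ℕ):ℂ))⁻¹
              show ((r^(2*m):ℝ):ℂ) * (c (-(j:ℤ)) * (conj z)^j) * (((m+j:ℕ):ℂ))⁻¹
                = (c (-(j:ℤ)) * (conj z)^j) * ((r^(2*m):ℝ):ℂ) * (((m+j:ℕ):ℂ))⁻¹
              ring
      have hqnorm : ∀ n : ℕ, ‖q n‖ = r^(2*n) * ((n:ℝ))⁻¹ := by
        intro n
        show ‖((r^(2*n) * ((n:ℝ))⁻¹ : ℝ):ℂ)‖ = _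
        rw [Complex.norm_real, Real.norm_eq_abs, abs_of_nonneg (by positivity)]
      have htail1 : ∀ J : ℕ, (∑' k : ℕ, ‖f1 (k + J)‖) ≤ B * (((J:ℝ)+2) * r^(J+1)) * C1 := by
        intro J
        have h1 : ∀ k : ℕ, ‖f1 (k+J)‖ ≤ B * g (k + (J+1)) := by
          intro k
          have := hf1b (k+J)
          rwa [show k+J+1 = k+(J+1) by omega] at this
        calc (∑' k : ℕ, ‖f1 (k + J)‖) ≤ ∑' k : ℕ, B * g (k + (J+1)) :=
              Summable.tsum_le_tsum h1 ((summable_nat_add_iff J).mpr hn1)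
                (((summable_nat_add_iff (J+1)).mpr hg).mul_left B)
        _ = B * ∑' k : ℕ, g (k + (J+1)) := tsum_mul_left
        _ ≤ B * ((((J+1:ℕ):ℝ)+1) * r^(J+1) * C1) :=
              mul_le_mul_of_nonneg_left (htail (J+1)) hB0
        _ = B * (((J:ℝ)+2) * r^(J+1)) * C1 := by push_cast; ring
      have htail2 : ∀ J : ℕ, (∑' k : ℕ, ‖f2 (k + J)‖) ≤ B * (((J:ℝ)+1) * r^J) * C1 := by
        intro J
        calc (∑' k : ℕ, ‖f2 (k + J)‖) ≤ ∑' k : ℕ, B * g (k + J) :=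
              Summable.tsum_le_tsum (fun k => hf2b (k+J)) ((summable_nat_add_iff J).mpr hn2)
                (((summable_nat_add_iff J).mpr hg).mul_left B)
        _ = B * ∑' k : ℕ, g (k + J) := tsum_mul_left
        _ ≤ B * (((J:ℝ)+1) * r^J * C1) := mul_le_mul_of_nonneg_left (htail J) hB0
        _ = B * (((J:ℝ)+1) * r^J) * C1 := by ring
      have hD1 : ∀ n ∈ I, ‖q n * (∑' k, f1 k) - G1 n‖
          ≤ B*C1*((M:ℝ)+1) * r^(n+(2*M+1)) := by
        intro n hn
        have hn' := Finset.mem_Icc.mp hn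
        have hid : q n * (∑' k, f1 k) - G1 n = (∑' k, f1 (k + (2*M-n))) * q n := by
          rw [hG1eq n hn, ← Summable.sum_add_tsum_nat_add (2*M-n) hs1]
          ring
        rw [hid, norm_mul, hqnorm n]
        have h1 : ‖∑' k, f1 (k + (2*M-n))‖ ≤ ∑' k, ‖f1 (k + (2*M-n))‖ :=
          norm_tsum_le_tsum_norm ((summable_nat_add_iff _).mpr hn1)
        have h2 := htail1 (2*M-n)
        have hJle : (((2*M-n:ℕ)):ℝ)+2 ≤ (M:ℝ)+1 := by
          have : (2*M-n) + 2 ≤ M + 1 := by omega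
          exact_mod_cast this
        have hn1' : (1:ℝ) ≤ (n:ℝ) := by exact_mod_cast (by omega : 1 ≤ n)
        have hninv : ((n:ℝ))⁻¹ ≤ 1 := inv_le_one_of_one_le₀ hn1'
        have hexp : r^((2*M-n)+1) * r^(2*n) = r^(n+(2*M+1)) := by
          rw [← pow_add]; congr 1; omega
        calc ‖∑' k, f1 (k + (2*M-n))‖ * (r^(2*n) * ((n:ℝ))⁻¹)
            ≤ (B * ((((2*M-n:ℕ)):ℝ)+2) * r^((2*M-n)+1) * C1) * (r^(2*n) * ((n:ℝ))⁻¹) := by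
              refine mul_le_mul_of_nonneg_right ((h1.trans h2).trans_eq (by ring)) (by positivity)
        _ ≤ (B * (((M:ℝ)+1)) * r^((2*M-n)+1) * C1) * (r^(2*n) * 1) := by
              gcongr
        _ = B*C1*((M:ℝ)+1) * (r^((2*M-n)+1) * r^(2*n)) := by ring
        _ = B*C1*((M:ℝ)+1) * r^(n+(2*M+1)) := by rw [hexp]
      have hD2 : ∀ m ∈ I, ‖q m * (∑' k, f2 k) - G2 m‖
          ≤ B*C2*((M:ℝ)+1)⁻¹ * (r^(2*m) * ((m:ℝ))⁻¹) + B*C1*((M:ℝ)+1) * r^(m+(2*M+1)) := by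
        intro m hm
        have hm' := Finset.mem_Icc.mp hm
        have hmR : ((M:ℝ))+1 ≤ (m:ℝ) := by exact_mod_cast (by omega : M+1 ≤ m)
        have hm1R : (1:ℝ) ≤ (m:ℝ) := by exact_mod_cast (by omega : 1 ≤ m)
        have hmpos : (0:ℝ) < (m:ℝ) := by linarith
        have hid : q m * (∑' k, f2 k) - G2 m
            = (∑ j ∈ Finset.range (2*M+1-m),
                f2 j * (q m - ((r^(2*m):ℝ):ℂ) * (((m+j:ℕ):ℂ))⁻¹))
              + (∑' j, f2 (j + (2*M+1-m))) * q m := by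
          have e1 : ∑ j ∈ Finset.range (2*M+1-m),
              f2 j * (q m - ((r^(2*m):ℝ):ℂ) * (((m+j:ℕ):ℂ))⁻¹)
              = (∑ j ∈ Finset.range (2*M+1-m), f2 j) * q m
                - ∑ j ∈ Finset.range (2*M+1-m),
                    (f2 j * ((r^(2*m):ℝ):ℂ) * (((m+j:ℕ):ℂ))⁻¹) := by
            rw [Finset.sum_mul, ← Finset.sum_sub_distrib]
            exact Finset.sum_congr rfl (fun j _ => by ring)
          rw [hG2eq m hm, e1, ← Summable.sum_add_tsum_nat_add (2*M+1-m) hs2]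
          ring
        rw [hid]
        refine (norm_add_le _ _).trans (add_le_add ?_ ?_)
        · -- finite part
          refine (norm_sum_le _ _).trans ?_
          have hterm : ∀ j ∈ Finset.range (2*M+1-m),
              ‖f2 j * (q m - ((r^(2*m):ℝ):ℂ) * (((m+j:ℕ):ℂ))⁻¹)‖
              ≤ (((j:ℝ)+1)^2 * r^j) * (B * (((M:ℝ)+1)⁻¹ * (r^(2*m) * ((m:ℝ))⁻¹))) := by
            intro j _
            have hmjpos : (0:ℝ) < (m:ℝ)+(j:ℝ) := by positivity
            have hdiffc : q m - ((r^(2*m):ℝ):ℂ) * (((m+j:ℕ):ℂ))⁻¹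
                = (((r^(2*m) * (((m:ℝ))⁻¹ - (((m:ℝ))+(j:ℝ))⁻¹)) : ℝ) : ℂ) := by
              show ((r^(2*m) * ((m:ℝ))⁻¹ : ℝ):ℂ) - _ = _
              push_cast
              ring
            have hkey : ((m:ℝ))⁻¹ - (((m:ℝ))+(j:ℝ))⁻¹
                ≤ (j:ℝ) * (((M:ℝ)+1)⁻¹ * ((m:ℝ))⁻¹) := by
              have h1 : ((m:ℝ))⁻¹ - (((m:ℝ))+(j:ℝ))⁻¹
                  = (j:ℝ) / ((m:ℝ) * ((m:ℝ)+(j:ℝ))) := by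
                field_simp
                ring
              have h2 : (j:ℝ) / ((m:ℝ) * ((m:ℝ)+(j:ℝ)))
                  ≤ (j:ℝ) / ((m:ℝ) * ((M:ℝ)+1)) := by
                refine div_le_div_of_nonneg_left (Nat.cast_nonneg j) (by positivity) ?_
                have : ((M:ℝ)+1) ≤ (m:ℝ)+(j:ℝ) := by
                  linarith [Nat.cast_nonneg (α := ℝ) j]
                exact mul_le_mul_of_nonneg_left this hmpos.le
              have h3 : (j:ℝ) / ((m:ℝ) * ((M:ℝ)+1))
                  = (j:ℝ) * (((M:ℝ)+1)⁻¹ * ((m:ℝ))⁻¹) := by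
                rw [div_eq_mul_inv, mul_inv]
                ring
              rw [h1, ← h3] at *
              exact h2
            have hdiffnn : (0:ℝ) ≤ ((m:ℝ))⁻¹ - (((m:ℝ))+(j:ℝ))⁻¹ := by
              have : (((m:ℝ))+(j:ℝ))⁻¹ ≤ ((m:ℝ))⁻¹ := by
                gcongr
                linarith [Nat.cast_nonneg (α := ℝ) j]
              linarith
            rw [norm_mul, hdiffc, Complex.norm_real, Real.norm_eq_abs,
              abs_of_nonneg (by positivity)]
            calc ‖f2 j‖ * (r^(2*m) * (((m:ℝ))⁻¹ - (((m:ℝ))+(j:ℝ))⁻¹))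
                ≤ (B * g j) * (r^(2*m) * ((j:ℝ) * (((M:ℝ)+1)⁻¹ * ((m:ℝ))⁻¹))) := by
                  have hrm : (0:ℝ) ≤ r^(2*m) := by positivity
                  exact mul_le_mul (hf2b j)
                    (mul_le_mul_of_nonneg_left hkey hrm)
                    (by positivity) (by positivity)
            _ = (((j:ℝ)+1) * r^j * (j:ℝ)) * (B * (((M:ℝ)+1)⁻¹ * (r^(2*m) * ((m:ℝ))⁻¹))) := by
                  show (B * (((j:ℝ)+1) * r^j)) * _ = _
                  ring
            _ ≤ (((j:ℝ)+1)^2 * r^j) * (B * (((M:ℝ)+1)⁻¹ * (r^(2*m) * ((m:ℝ))⁻¹))) := by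
                  have h4 : ((j:ℝ)+1) * r^j * (j:ℝ) ≤ ((j:ℝ)+1)^2 * r^j := by
                    have hj0 : (0:ℝ) ≤ (j:ℝ) := Nat.cast_nonneg j
                    nlinarith [pow_nonneg hr0.le j]
                  exact mul_le_mul_of_nonneg_right h4 (by positivity)
          calc (∑ j ∈ Finset.range (2*M+1-m),
              ‖f2 j * (q m - ((r^(2*m):ℝ):ℂ) * (((m+j:ℕ):ℂ))⁻¹)‖)
              ≤ ∑ j ∈ Finset.range (2*M+1-m),
                  (((j:ℝ)+1)^2 * r^j) * (B * (((M:ℝ)+1)⁻¹ * (r^(2*m) * ((m:ℝ))⁻¹))) :=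
                Finset.sum_le_sum hterm
          _ = (∑ j ∈ Finset.range (2*M+1-m), ((j:ℝ)+1)^2 * r^j)
                * (B * (((M:ℝ)+1)⁻¹ * (r^(2*m) * ((m:ℝ))⁻¹))) := by
                rw [← Finset.sum_mul]
          _ ≤ C2 * (B * (((M:ℝ)+1)⁻¹ * (r^(2*m) * ((m:ℝ))⁻¹))) := by
                refine mul_le_mul_of_nonneg_right ?_ (by positivity)
                exact Summable.sum_le_tsum _ (fun i _ => by positivity) hg2
          _ = B*C2*((M:ℝ)+1)⁻¹ * (r^(2*m) * ((m:ℝ))⁻¹) := by ring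
        · -- tail part
          rw [norm_mul, hqnorm m]
          have h1 : ‖∑' j, f2 (j + (2*M+1-m))‖ ≤ ∑' j, ‖f2 (j + (2*M+1-m))‖ :=
            norm_tsum_le_tsum_norm ((summable_nat_add_iff _).mpr hn2)
          have h2 := htail2 (2*M+1-m)
          have hJle : (((2*M+1-m:ℕ)):ℝ)+1 ≤ (M:ℝ)+1 := by
            have : (2*M+1-m) + 1 ≤ M + 1 := by omega
            exact_mod_cast this
          have hninv : ((m:ℝ))⁻¹ ≤ 1 := inv_le_one_of_one_le₀ hm1R
          have hexp : r^(2*M+1-m) * r^(2*m) = r^(m+(2*M+1)) := by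
            rw [← pow_add]; congr 1; omega
          calc ‖∑' j, f2 (j + (2*M+1-m))‖ * (r^(2*m) * ((m:ℝ))⁻¹)
              ≤ (B * ((((2*M+1-m:ℕ)):ℝ)+1) * r^(2*M+1-m) * C1) * (r^(2*m) * ((m:ℝ))⁻¹) := by
                refine mul_le_mul_of_nonneg_right ((h1.trans h2).trans_eq (by ring))
                  (by positivity)
          _ ≤ (B * (((M:ℝ)+1)) * r^(2*M+1-m) * C1) * (r^(2*m) * 1) := by gcongr
          _ = B*C1*((M:ℝ)+1) * (r^(2*M+1-m) * r^(2*m)) := by ring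
          _ = B*C1*((M:ℝ)+1) * r^(m+(2*M+1)) := by rw [hexp]
      have hcard : I.card = M := by rw [hIdef, Nat.card_Icc]; omega
      have hsumtot : ∑ n ∈ I, (B*C1*((M:ℝ)+1) * r^(n+(2*M+1)))
          ≤ B*C1*((M:ℝ)+1) * ((M:ℝ) * r^(3*M+2)) := by
        have hterm : ∀ n ∈ I, B*C1*((M:ℝ)+1) * r^(n+(2*M+1))
            ≤ B*C1*((M:ℝ)+1) * r^(3*M+2) := by
          intro n hn
          have hn' := Finset.mem_Icc.mp hn
          exact mul_le_mul_of_nonneg_left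
            (pow_le_pow_of_le_one hr0.le hr1.le (by omega)) (by positivity)
        calc ∑ n ∈ I, (B*C1*((M:ℝ)+1) * r^(n+(2*M+1)))
            ≤ ∑ _n ∈ I, (B*C1*((M:ℝ)+1) * r^(3*M+2)) := Finset.sum_le_sum hterm
        _ = (M:ℝ) * (B*C1*((M:ℝ)+1) * r^(3*M+2)) := by
            rw [Finset.sum_const, hcard, nsmul_eq_mul]
        _ = B*C1*((M:ℝ)+1) * ((M:ℝ) * r^(3*M+2)) := by ring
      have hdiffid : ((∑' k, f1 k) + (∑' k, f2 k)) * ((S:ℝ):ℂ) - ⟪v, T v⟫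
          = (∑ n ∈ I, (q n * (∑' k, f1 k) - G1 n))
            + ∑ m ∈ I, (q m * (∑' k, f2 k) - G2 m) := by
        rw [hQ, hsplit]
        have hSc : ((S:ℝ):ℂ) = ∑ n ∈ I, q n := by
          rw [hSdef, Complex.ofReal_sum]
        rw [hSc, Finset.mul_sum]
        rw [Finset.sum_congr rfl
          (fun n (_ : n ∈ I) => (by ring :
            ((∑' k, f1 k) + (∑' k, f2 k)) * q n
              = q n * (∑' k, f1 k) + q n * (∑' k, f2 k)))]
        rw [Finset.sum_add_distrib, Finset.sum_sub_distrib, Finset.sum_sub_distrib]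
        ring
      have hnd : ‖((∑' k, f1 k) + (∑' k, f2 k)) * ((S:ℝ):ℂ) - ⟪v, T v⟫‖
          ≤ B*C2*((M:ℝ)+1)⁻¹ * S + 2 * (B*C1*((M:ℝ)+1) * ((M:ℝ) * r^(3*M+2))) := by
        rw [hdiffid]
        refine (norm_add_le _ _).trans ?_
        have hA : ‖∑ n ∈ I, (q n * (∑' k, f1 k) - G1 n)‖
            ≤ B*C1*((M:ℝ)+1) * ((M:ℝ) * r^(3*M+2)) :=
          (norm_sum_le _ _).trans ((Finset.sum_le_sum hD1).trans hsumtot)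
        have hB2 : ‖∑ m ∈ I, (q m * (∑' k, f2 k) - G2 m)‖
            ≤ B*C2*((M:ℝ)+1)⁻¹ * S + B*C1*((M:ℝ)+1) * ((M:ℝ) * r^(3*M+2)) := by
          refine (norm_sum_le _ _).trans ((Finset.sum_le_sum hD2).trans ?_)
          rw [Finset.sum_add_distrib]
          have he1 : ∑ m ∈ I, (B*C2*((M:ℝ)+1)⁻¹ * (r^(2*m) * ((m:ℝ))⁻¹))
              = B*C2*((M:ℝ)+1)⁻¹ * S := by
            rw [hSdef, Finset.mul_sum]
          exact add_le_add he1.le hsumtot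
        linarith
      have hSlb : r^(2*M+2) ≤ ((M:ℝ)+1) * S := by
        have hmemM : M+1 ∈ I := Finset.mem_Icc.mpr (by omega)
        have h1 : r^(2*(M+1)) * (((M+1:ℕ)):ℝ)⁻¹ ≤ S :=
          Finset.single_le_sum (f := fun n : ℕ => r^(2*n) * ((n:ℝ))⁻¹)
            (fun i _ => mul_nonneg (pow_nonneg hr0.le _) (inv_nonneg.mpr (Nat.cast_nonneg i)))
            hmemM
        have h2 : (((M+1:ℕ)):ℝ) = (M:ℝ)+1 := by push_cast; ring
        rw [h2] at h1
        have hM0 : (0:ℝ) < (M:ℝ)+1 := by positivity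
        have h3 : r^(2*M+2) = ((M:ℝ)+1) * (r^(2*(M+1)) * ((M:ℝ)+1)⁻¹) := by
          rw [show 2*(M+1) = 2*M+2 by omega]
          field_simp
        rw [h3]
        exact mul_le_mul_of_nonneg_left h1 hM0.le
      have hSpos : 0 < S := by
        nlinarith [pow_pos hr0 (2*M+2), hSlb, hS0]
      have hmain : ‖(∑' k, f1 k) + (∑' k, f2 k)‖ * S
          ≤ (B + B*C2*((M:ℝ)+1)⁻¹ + 2*B*C1*(((M:ℝ)+1)^3 * r^M)) * S := by
        have h1 : ‖(∑' k, f1 k) + (∑' k, f2 k)‖ * S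
            = ‖((∑' k, f1 k) + (∑' k, f2 k)) * ((S:ℝ):ℂ)‖ := by
          rw [norm_mul, Complex.norm_real, Real.norm_eq_abs, abs_of_nonneg hS0]
        have e1 : r^(3*M+2) = r^M * r^(2*M+2) := by rw [← pow_add]; congr 1; omega
        have hlast : 2 * (B*C1*((M:ℝ)+1) * ((M:ℝ) * r^(3*M+2)))
            ≤ 2*B*C1*(((M:ℝ)+1)^3 * r^M) * S := by
          calc 2 * (B*C1*((M:ℝ)+1) * ((M:ℝ) * r^(3*M+2)))
              = 2*B*C1*(((M:ℝ)+1)*(M:ℝ)) * (r^M * r^(2*M+2)) := by rw [e1]; ring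
          _ ≤ 2*B*C1*(((M:ℝ)+1)*((M:ℝ)+1)) * (r^M * (((M:ℝ)+1) * S)) := by
              have hf1' : ((M:ℝ)+1)*(M:ℝ) ≤ ((M:ℝ)+1)*((M:ℝ)+1) := by nlinarith [Nat.cast_nonneg (α := ℝ) M]
              have hf2' : r^M * r^(2*M+2) ≤ r^M * (((M:ℝ)+1) * S) :=
                mul_le_mul_of_nonneg_left hSlb (by positivity)
              have h0 : (0:ℝ) ≤ 2*B*C1 := by positivity
              have := mul_le_mul (mul_le_mul_of_nonneg_left hf1' h0) hf2'
                (by positivity) (by positivity)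
              linarith [this]
          _ = 2*B*C1*(((M:ℝ)+1)^3 * r^M) * S := by ring
        calc ‖(∑' k, f1 k) + (∑' k, f2 k)‖ * S
            = ‖((∑' k, f1 k) + (∑' k, f2 k)) * ((S:ℝ):ℂ)‖ := h1
        _ = ‖⟪v, T v⟫ + (((∑' k, f1 k) + (∑' k, f2 k)) * ((S:ℝ):ℂ) - ⟪v, T v⟫)‖ := by
            congr 1
            ring
        _ ≤ ‖⟪v, T v⟫‖ + ‖((∑' k, f1 k) + (∑' k, f2 k)) * ((S:ℝ):ℂ) - ⟪v, T v⟫‖ :=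
            norm_add_le _ _
        _ ≤ B*S + (B*C2*((M:ℝ)+1)⁻¹ * S + 2 * (B*C1*((M:ℝ)+1) * ((M:ℝ) * r^(3*M+2)))) :=
            add_le_add hQle hnd
        _ ≤ (B + B*C2*((M:ℝ)+1)⁻¹ + 2*B*C1*(((M:ℝ)+1)^3 * r^M)) * S := by
            have := hlast
            nlinarith [this]
      have hfin := le_of_mul_le_mul_right hmain hSpos
      have hMN : ((M:ℝ)+1) = (N:ℝ)+2 := by rw [hMdef]; push_cast; ring
      have hrM : r^M = r^(N+1) := by rw [hMdef]
      rw [hMN, hrM] at hfin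
      exact hfin
    have l1 : Filter.Tendsto (fun N : ℕ => ((N:ℝ)+2)⁻¹) Filter.atTop (nhds 0) := by
      apply Filter.Tendsto.inv_tendsto_atTop
      exact Filter.tendsto_atTop_add_const_right _ 2 tendsto_natCast_atTop_atTop
    have l2 : Filter.Tendsto (fun N : ℕ => ((N:ℝ)+2)^3 * r^(N+1)) Filter.atTop (nhds 0) := by
      have hsum3 : Summable (fun i : ℕ => ((i:ℝ)+1)^3 * r^i) := by
        have h3 := summable_pow_mul_geometric_of_norm_lt_one 3 hrn
        have h2 := summable_pow_mul_geometric_of_norm_lt_one 2 hrn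
        have h1 := summable_pow_mul_geometric_of_norm_lt_one 1 hrn
        have h0 := summable_geometric_of_lt_one (le_of_lt hr0) hr1
        exact (((h3.add (h2.mul_left 3)).add (h1.mul_left 3)).add h0).congr
          (fun i => by push_cast; ring)
      have t0 := hsum3.tendsto_atTop_zero
      have t1 := t0.comp (Filter.tendsto_add_atTop_nat 1)
      refine t1.congr (fun N => ?_)
      simp only [Function.comp]
      push_cast
      ring
    have hlim : Filter.Tendsto
        (fun N : ℕ => B + B*C2*((N:ℝ)+2)⁻¹ + 2*B*C1*(((N:ℝ)+2)^3 * r^(N+1)))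
        Filter.atTop (nhds B) := by
      have hx := l1.const_mul (B*C2)
      have hy := l2.const_mul (2*B*C1)
      have h := ((tendsto_const_nhds (x := B) (f := Filter.atTop (α := ℕ))).add hx).add hy
      simpa using h
    exact ge_of_tendsto' hlim key
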